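/- The Firework process survives with positive probability (P(M = ∞) > 0) if and only if ∑_{j≥1} ∏_{i=0}^{j-1} α_i < ∞. -/

import Mathlib

set_option maxHeartbeats 1000000


open MeasureTheory ProbabilityTheory Filter Finset
open scoped ENNReal

/-- The final number of spreaders of the Firework process:
`M = min{ i ≥ 0 : R_j ≤ i - j for all j = 0,...,i }`, with value `⊤` if no such `i` exists. -/
noncomputable def fireworkM {Ω : Type*} (R : ℕ → Ω → ℕ) (ω : Ω) : ℕ∞ :=
  sInf {N : ℕ∞ | ∃ i : ℕ, N = (i : ℕ∞) ∧ ∀ j ≤ i, R j ω ≤ i - j}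

lemma fireworkM_eq_top_iff {Ω : Type*} (R : ℕ → Ω → ℕ) (ω : Ω) :
    fireworkM R ω = ⊤ ↔ ∀ i : ℕ, ¬ (∀ j ≤ i, R j ω ≤ i - j) := by
  rw [fireworkM, sInf_eq_top]
  constructor
  · intro h i hA
    exact ENat.coe_ne_top i (h _ ⟨i, rfl, hA⟩)
  · rintro h N ⟨i, rfl, hA⟩
    exact absurd hA (h i)

lemma fireworkM_eq_coe_iff {Ω : Type*} (R : ℕ → Ω → ℕ) (ω : Ω) (i : ℕ) :
    fireworkM R ω = (i : ℕ∞) ↔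
      (∀ j ≤ i, R j ω ≤ i - j) ∧ ∀ i' < i, ¬ (∀ j ≤ i', R j ω ≤ i' - j) := by
  classical
  constructor
  · intro h
    have hex : ∃ i₀ : ℕ, ∀ j ≤ i₀, R j ω ≤ i₀ - j := by
      by_contra hne
      push_neg at hne
      have : fireworkM R ω = ⊤ := (fireworkM_eq_top_iff R ω).mpr (by
        intro n hn; obtain ⟨j, hj, hj'⟩ := hne n; exact absurd (hn j hj) (by omega))
      rw [h] at this; exact ENat.coe_ne_top i this
    have h₀ : fireworkM R ω = ((Nat.find hex : ℕ) : ℕ∞) := by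
      apply le_antisymm
      · exact sInf_le ⟨Nat.find hex, rfl, Nat.find_spec hex⟩
      · apply le_sInf
        rintro N ⟨i', rfl, hA'⟩
        exact_mod_cast Nat.find_min' hex hA'
    rw [h] at h₀
    have hii : i = Nat.find hex := by exact_mod_cast h₀
    subst hii
    exact ⟨Nat.find_spec hex, fun j hj => Nat.find_min hex (by omega)⟩
  · rintro ⟨h1, h2⟩
    apply le_antisymm
    · exact sInf_le ⟨i, rfl, h1⟩
    · apply le_sInf
      rintro N ⟨i', rfl, hA'⟩
      have : i ≤ i' := by
        by_contra hlt
        exact h2 i' (by omega) hA'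
      exact_mod_cast this

lemma rumor_tsum_conv (u c : ℕ → ℝ≥0∞) :
    ∑' n : ℕ, ∑ i ∈ range (n + 1), u i * c (n - i) = (∑' i, u i) * ∑' m, c m := by
  have key : ∑' p : ℕ × ℕ, u p.1 * c p.2
      = ∑' n : ℕ, ∑ i ∈ range (n + 1), u i * c (n - i) := by
    rw [← Finset.HasAntidiagonal.sigmaAntidiagonalEquivProd.tsum_eq (fun p : ℕ × ℕ => u p.1 * c p.2)]
    rw [ENNReal.tsum_sigma' (fun x : Σ n : ℕ, (Finset.HasAntidiagonal.antidiagonal n : Finset (ℕ × ℕ)) =>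
      u ((Finset.HasAntidiagonal.sigmaAntidiagonalEquivProd x).1) * c ((Finset.HasAntidiagonal.sigmaAntidiagonalEquivProd x).2))]
    refine tsum_congr fun n => ?_
    rw [show (fun b : (Finset.HasAntidiagonal.antidiagonal n : Finset (ℕ × ℕ)) =>
        u ((Finset.HasAntidiagonal.sigmaAntidiagonalEquivProd ⟨n, b⟩).1)
          * c ((Finset.HasAntidiagonal.sigmaAntidiagonalEquivProd ⟨n, b⟩).2))
      = fun b : (Finset.HasAntidiagonal.antidiagonal n : Finset (ℕ × ℕ)) => u (b : ℕ × ℕ).1 * c (b : ℕ × ℕ).2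
      from rfl]
    rw [(Finset.HasAntidiagonal.antidiagonal n).tsum_subtype (fun p : ℕ × ℕ => u p.1 * c p.2)]
    exact Finset.Nat.sum_antidiagonal_eq_sum_range_succ_mk (fun p => u p.1 * c p.2) n
  rw [← key, ENNReal.tsum_prod']
  simp_rw [ENNReal.tsum_mul_left]
  rw [ENNReal.tsum_mul_right]

/-- the Firework process survives with positive probability iff
`∑_{j≥1} ∏_{i=0}^{j-1} α_i < ∞`. -/
theorem rumor_stmt_3 {Ω : Type*} [MeasurableSpace Ω] (P : Measure Ω) [IsProbabilityMeasure P]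
    (R : ℕ → Ω → ℕ) (hmeas : ∀ i, Measurable (R i))
    (hindep : iIndepFun R P)
    (hident : ∀ i, Measure.map (R i) P = Measure.map (R 0) P)
    (α : ℕ → ℝ≥0∞) (hα : ∀ k, P {ω | R 0 ω ≤ k} = α k)
    (hα0 : 0 < α 0 ∧ α 0 < 1) :
    0 < P {ω | fireworkM R ω = ⊤} ↔
      (∑' j : ℕ, ∏ i ∈ Finset.range (j + 1), α i) < ⊤ := by
  classical
  -- basic events and quantities
  let e : ℕ → ℕ → Set Ω := fun j k => R j ⁻¹' Set.Iic k
  let A : ℕ → Set Ω := fun n => {ω | ∀ j ≤ n, R j ω ≤ n - j}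
  let D : ℕ → Set Ω := fun i => {ω | fireworkM R ω = (i : ℕ∞)}
  let c : ℕ → ℝ≥0∞ := fun m => ∏ k ∈ range m, α k
  let u : ℕ → ℝ≥0∞ := fun i => P (D i)
  have he_comap : ∀ j k, MeasurableSet[MeasurableSpace.comap (R j) inferInstance] (e j k) :=
    fun j k => ⟨Set.Iic k, .of_discrete, rfl⟩
  have he_meas : ∀ j k, MeasurableSet (e j k) := fun j k => hmeas j .of_discrete
  have hα_le : ∀ k, α k ≤ 1 := fun k => (hα k) ▸ prob_le_one
  have hPe : ∀ j k, P (e j k) = α k := by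
    intro j k
    have h1 : P (e j k) = Measure.map (R j) P (Set.Iic k) :=
      (Measure.map_apply (hmeas j) .of_discrete).symm
    rw [h1, hident j, Measure.map_apply (hmeas 0) .of_discrete]
    exact hα k
  have hA_eq : ∀ n, A n = ⋂ j ∈ range (n + 1), e j (n - j) := by
    intro n
    ext ω
    simp only [A, e, Set.mem_setOf_eq, Set.mem_iInter, Set.mem_preimage, Set.mem_Iic,
      Finset.mem_range, Nat.lt_succ_iff]
  have hA_meas : ∀ n, MeasurableSet (A n) := by
    intro n
    rw [hA_eq n]
    exact MeasurableSet.iInter fun j => MeasurableSet.iInter fun _ => he_meas _ _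
  have hPA : ∀ n, P (A n) = c (n + 1) := by
    intro n
    rw [hA_eq n,
      hindep.meas_biInter (S := range (n + 1)) (s := fun j => e j (n - j))
        (fun j _ => he_comap j (n - j))]
    have h1 : ∀ j ∈ range (n + 1), P (e j (n - j)) = α (n - j) := fun j _ => hPe j (n - j)
    rw [Finset.prod_congr rfl h1]
    have := Finset.prod_range_reflect (fun k => α k) (n + 1)
    simpa using this
  have hD_char : ∀ i, D i = A i ∩ ⋂ j ∈ range i, (A j)ᶜ := by
    intro i
    ext ω
    simp only [D, A, Set.mem_setOf_eq, fireworkM_eq_coe_iff, Set.mem_inter_iff,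
      Set.mem_iInter, Finset.mem_range, Set.mem_compl_iff]
  have hD_meas : ∀ i, MeasurableSet (D i) := by
    intro i
    rw [hD_char i]
    exact (hA_meas i).inter
      (MeasurableSet.iInter fun j => MeasurableSet.iInter fun _ => (hA_meas j).compl)
  have hD_disj : Pairwise (Function.onFun Disjoint D) := by
    intro i j hij
    refine Set.disjoint_left.mpr fun ω hi hj => hij ?_
    have h1 : fireworkM R ω = (i : ℕ∞) := hi
    have h2 : fireworkM R ω = (j : ℕ∞) := hj
    have : (i : ℕ∞) = (j : ℕ∞) := h1.symm.trans h2
    exact_mod_cast this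
  have hUnionD : P (⋃ i, D i) = ∑' i, u i := measure_iUnion hD_disj hD_meas
  have hTop : {ω | fireworkM R ω = ⊤} = (⋃ i, D i)ᶜ := by
    ext ω
    simp only [Set.mem_compl_iff, Set.mem_iUnion, D, Set.mem_setOf_eq, not_exists]
    constructor
    · intro h i hi
      rw [h] at hi
      exact ENat.coe_ne_top i hi.symm
    · intro h
      by_contra hne
      obtain ⟨n, hn⟩ := WithTop.ne_top_iff_exists.mp hne
      exact h n hn.symm
  set U : ℝ≥0∞ := ∑' i, u i with hU_def
  have hU_le : U ≤ 1 := by rw [← hUnionD]; exact prob_le_one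
  have hq : P {ω | fireworkM R ω = ⊤} = 1 - U := by
    rw [hTop, prob_compl_eq_one_sub (MeasurableSet.iUnion hD_meas), hUnionD]
  -- the renewal identity
  have hkey : ∀ n, c (n + 1) = ∑ i ∈ range (n + 1), u i * c (n - i) := by
    intro n
    have hdecomp : A n = ⋃ i ∈ range (n + 1), (D i ∩ A n) := by
      ext ω
      constructor
      · intro hω
        have hex : ∃ i, ω ∈ A i := ⟨n, hω⟩
        have hfind : ω ∈ A (Nat.find hex) := Nat.find_spec hex
        have hi₀n : Nat.find hex ≤ n := Nat.find_min' hex hω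
        have hM : fireworkM R ω = ((Nat.find hex : ℕ) : ℕ∞) :=
          (fireworkM_eq_coe_iff R ω _).mpr
            ⟨hfind, fun j hj hA' => Nat.find_min hex hj hA'⟩
        exact Set.mem_iUnion₂.mpr
          ⟨Nat.find hex, Finset.mem_range.mpr (Nat.lt_succ_of_le hi₀n), hM, hω⟩
      · intro hω
        obtain ⟨i, _, _, hA'⟩ := Set.mem_iUnion₂.mp hω
        exact hA'
    have hPdecomp : P (A n) = ∑ i ∈ range (n + 1), P (D i ∩ A n) := by
      conv_lhs => rw [hdecomp]
      refine measure_biUnion_finset ?_ (fun i _ => (hD_meas i).inter (hA_meas n))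
      intro i _ j _ hij
      exact (hD_disj hij).mono Set.inter_subset_left Set.inter_subset_left
    have hterm : ∀ i ∈ range (n + 1), P (D i ∩ A n) = u i * c (n - i) := by
      intro i hi
      replace hi : i ≤ n := by simpa [Nat.lt_succ_iff] using hi
      have hset : D i ∩ A n = D i ∩ ⋂ j ∈ Finset.Icc (i + 1) n, e j (n - j) := by
        ext ω
        simp only [Set.mem_inter_iff, Set.mem_iInter, Finset.mem_Icc, D, A, e,
          Set.mem_setOf_eq, Set.mem_preimage, Set.mem_Iic]
        constructor
        · rintro ⟨hD', hA'⟩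
          exact ⟨hD', fun j hj => hA' j hj.2⟩
        · rintro ⟨hD', hI⟩
          refine ⟨hD', fun j hj => ?_⟩
          by_cases hji : j ≤ i
          · have h1 := ((fireworkM_eq_coe_iff R ω i).mp hD').1 j hji
            omega
          · exact hI j ⟨by omega, hj⟩
      have hIndep2 : Indep (⨆ j ∈ Set.Iic i, MeasurableSpace.comap (R j) inferInstance)
          (⨆ j ∈ Set.Ioi i, MeasurableSpace.comap (R j) inferInstance) P := by
        refine indep_iSup_of_disjoint (fun j => (hmeas j).comap_le) hindep.iIndep ?_
        refine Set.disjoint_left.mpr fun j hj hj' => ?_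
        simp only [Set.mem_Iic] at hj
        simp only [Set.mem_Ioi] at hj'
        omega
      have hA_m1 : ∀ j ≤ i, MeasurableSet[⨆ j ∈ Set.Iic i,
          MeasurableSpace.comap (R j) inferInstance] (A j) := by
        intro j hj
        rw [hA_eq j]
        refine MeasurableSet.iInter fun j' => MeasurableSet.iInter fun hj' => ?_
        have hj'i : j' ≤ i := by
          simp only [Finset.mem_range, Nat.lt_succ_iff] at hj'
          omega
        exact le_biSup (fun j => MeasurableSpace.comap (R j) inferInstance) (Set.mem_Iic.mpr hj'i) _ (he_comap j' _)
      have hD_m1 : MeasurableSet[⨆ j ∈ Set.Iic i,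
          MeasurableSpace.comap (R j) inferInstance] (D i) := by
        rw [hD_char i]
        refine (hA_m1 i le_rfl).inter
          (MeasurableSet.iInter fun j => MeasurableSet.iInter fun hj => ?_)
        have : j ≤ i := by simp only [Finset.mem_range] at hj; omega
        exact (hA_m1 j this).compl
      have hC_m2 : MeasurableSet[⨆ j ∈ Set.Ioi i,
          MeasurableSpace.comap (R j) inferInstance]
          (⋂ j ∈ Finset.Icc (i + 1) n, e j (n - j)) := by
        refine MeasurableSet.iInter fun j => MeasurableSet.iInter fun hj => ?_
        have : i < j := by simp only [Finset.mem_Icc] at hj; omega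
        exact le_biSup (fun j => MeasurableSpace.comap (R j) inferInstance) (Set.mem_Ioi.mpr this) _ (he_comap j _)
      have hPC : P (⋂ j ∈ Finset.Icc (i + 1) n, e j (n - j)) = c (n - i) := by
        rw [hindep.meas_biInter (S := Finset.Icc (i + 1) n) (s := fun j => e j (n - j))
          (fun j _ => he_comap j (n - j))]
        have h1 : ∀ j ∈ Finset.Icc (i + 1) n, P (e j (n - j)) = α (n - j) :=
          fun j _ => hPe j (n - j)
        rw [Finset.prod_congr rfl h1]
        have himg : Finset.Icc (i + 1) n = (range (n - i)).image (fun k => n - k) := by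
          ext j
          simp only [Finset.mem_Icc, Finset.mem_image, Finset.mem_range]
          constructor
          · rintro ⟨h1', h2'⟩; exact ⟨n - j, by omega, by omega⟩
          · rintro ⟨k, hk, rfl⟩; omega
        rw [himg, Finset.prod_image (by
          intro a ha b hb hab
          simp only [Finset.mem_coe, Finset.mem_range] at ha hb hab
          omega)]
        refine Finset.prod_congr rfl fun k hk => ?_
        simp only [Finset.mem_range] at hk
        congr 1
        omega
      calc P (D i ∩ A n)
          = P (D i) * P (⋂ j ∈ Finset.Icc (i + 1) n, e j (n - j)) := by
            rw [hset]
            exact ((Indep_iff _ _ _).mp hIndep2) _ _ hD_m1 hC_m2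
        _ = u i * c (n - i) := by rw [hPC]
    rw [← hPA n, hPdecomp]
    exact Finset.sum_congr rfl hterm
  -- finiteness facts
  have hc_le : ∀ m, c m ≤ 1 := fun m => Finset.prod_le_one' (fun k _ => hα_le k)
  have hc_ne_top : ∀ m, c m ≠ ⊤ := fun m => ((hc_le m).trans_lt ENNReal.one_lt_top).ne
  -- the goal sum
  have hgoal : (∑' j : ℕ, ∏ i ∈ Finset.range (j + 1), α i) = ∑' j : ℕ, c (j + 1) := rfl
  rw [hgoal, hq]
  set s : ℝ≥0∞ := ∑' j : ℕ, c (j + 1) with hs_def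
  have hsum_c : ∑' m : ℕ, c m = 1 + s := by
    rw [tsum_eq_zero_add' ENNReal.summable]
    simp [c]
    rfl
  constructor
  · -- survival ⇒ summability
    intro hpos
    have hq_ne0 : (1 : ℝ≥0∞) - U ≠ 0 := hpos.ne'
    have hq_ne_top : (1 : ℝ≥0∞) - U ≠ ⊤ := by
      refine (lt_of_le_of_lt ?_ ENNReal.one_lt_top).ne
      exact tsub_le_self
    have hqU : (1 - U) + U = 1 := tsub_add_cancel_of_le hU_le
    -- partial sums
    set t : ℕ → ℝ≥0∞ := fun N => ∑ n ∈ range N, c (n + 1) with ht_def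
    have ht_ne_top : ∀ N, t N ≠ ⊤ := by
      intro N
      refine (ENNReal.sum_lt_top.mpr fun n _ => ?_).ne
      exact lt_of_le_of_ne le_top (hc_ne_top (n + 1))
    have hbound : ∀ N, t N ≤ (1 - U) ⁻¹ := by
      intro N
      -- swap the order of summation
      have hswap : t N = ∑ i ∈ range N, ∑ n ∈ Finset.Icc i (N - 1), u i * c (n - i) := by
        rw [ht_def]
        simp only
        rw [Finset.sum_congr rfl (fun n _ => hkey n)]
        refine Finset.sum_comm' fun n i => ?_
        simp only [Finset.mem_range, Finset.mem_Icc, Nat.lt_succ_iff]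
        omega
      have hinner : ∀ i ∈ range N, ∑ n ∈ Finset.Icc i (N - 1), u i * c (n - i)
          ≤ u i * ∑ m ∈ range N, c m := by
        intro i hi
        rw [← Finset.mul_sum]
        refine mul_le_mul_right ?_ (u i)
        have himg : Finset.Icc i (N - 1) = (range (N - i)).image (fun m => m + i) := by
          simp only [Finset.mem_range] at hi
          ext j
          simp only [Finset.mem_Icc, Finset.mem_image, Finset.mem_range]
          constructor
          · rintro ⟨h1', h2'⟩; exact ⟨j - i, by omega, by omega⟩
          · rintro ⟨k, hk, rfl⟩; omega
        rw [himg, Finset.sum_image (by intro a _ b _ hab; simp only at hab; omega)]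
        have h2 : ∑ k ∈ range (N - i), c (k + i - i) = ∑ k ∈ range (N - i), c k :=
          Finset.sum_congr rfl fun k _ => by congr 1; omega
        rw [h2]
        exact Finset.sum_le_sum_of_subset (Finset.range_subset_range.mpr (by omega))
      have h3 : t N ≤ (∑ i ∈ range N, u i) * ∑ m ∈ range N, c m := by
        rw [hswap, Finset.sum_mul]
        exact Finset.sum_le_sum hinner
      have h4 : (∑ i ∈ range N, u i) ≤ U := ENNReal.sum_le_tsum (range N)
      have h5 : ∑ m ∈ range N, c m ≤ 1 + t N := by
        rcases N with _ | K
        · simp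
        · rw [Finset.sum_range_succ']
          simp only [c, Finset.prod_range_zero]
          rw [add_comm]
          refine add_le_add le_rfl ?_
          exact Finset.sum_le_sum_of_subset (Finset.range_subset_range.mpr (by omega))
      have h6 : t N ≤ U * (1 + t N) :=
        h3.trans (mul_le_mul' h4 h5)
      -- cancel to get (1-U) * t N ≤ U
      have h7 : (1 - U) * t N + U * t N ≤ U + U * t N := by
        rw [← add_mul, hqU, one_mul]
        calc t N ≤ U * (1 + t N) := h6
          _ = U + U * t N := by rw [mul_add, mul_one]
      have hUt_ne_top : U * t N ≠ ⊤ :=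
        ENNReal.mul_ne_top (hU_le.trans_lt ENNReal.one_lt_top).ne (ht_ne_top N)
      have h8 : (1 - U) * t N ≤ U :=
        (ENNReal.add_le_add_iff_right hUt_ne_top).mp h7
      have h9 : t N * (1 - U) ≤ 1 := by
        rw [mul_comm]
        exact h8.trans hU_le
      rw [← one_div]
      exact (ENNReal.le_div_iff_mul_le (Or.inl hq_ne0) (Or.inl hq_ne_top)).mpr h9
    have hsle : s ≤ (1 - U)⁻¹ := by
      rw [hs_def, ENNReal.tsum_eq_iSup_sum]
      refine iSup_le fun F => ?_
      refine le_trans ?_ (hbound ((F.sup id) + 1))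
      refine Finset.sum_le_sum_of_subset fun n hn => ?_
      simp only [Finset.mem_range]
      exact Nat.lt_succ_of_le (Finset.le_sup (f := id) hn)
    exact hsle.trans_lt (ENNReal.inv_lt_top.mpr (pos_iff_ne_zero.mpr hq_ne0))
  · -- summability ⇒ survival
    intro hs
    by_contra h0
    have hq0 : (1 : ℝ≥0∞) - U = 0 := by
      simpa [pos_iff_ne_zero] using h0
    have hU1 : U = 1 := le_antisymm hU_le (tsub_eq_zero_iff_le.mp hq0)
    have hmaster : s = 1 + s := by
      calc s = ∑' n : ℕ, ∑ i ∈ range (n + 1), u i * c (n - i) := tsum_congr hkey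
        _ = U * ∑' m : ℕ, c m := rumor_tsum_conv u c
        _ = 1 + s := by rw [hU1, one_mul, hsum_c]
    have : s < 1 + s := by
      calc s < s + 1 := ENNReal.lt_add_right hs.ne one_ne_zero
        _ = 1 + s := add_comm s 1
    rw [← hmaster] at this
    exact lt_irrefl s this
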